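/- Let n ≥ 1 and p an odd positive integer. Define T on C¹-functions on a suitable invariant interval by (Tf)(t) = cos²(πt/n)·f(t/(2n)) + sin²(πt/n)·f(t/(2n) + p/4). If p < 2(2n−1)/π, then max|(Tf)'| ≤ ((πp)/(4n) + 1/(2n))·max|f'| with (πp)/(4n) + 1/(2n) < 1, so T is strictly contractive in the seminorm max|f'|. -/

import Mathlib

open Real

theorem stmt13 (n : ℕ) (hn : 1 ≤ n) (p : ℕ) (hp : Odd p) (hppos : 0 < p)
    (hpn : (p : ℝ) < 2 * (2 * n - 1) / π)
    (a b : ℝ)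
    (hJ0 : ∀ t ∈ Set.Icc a b, t / (2 * n) ∈ Set.Icc a b)
    (hJp : ∀ t ∈ Set.Icc a b, t / (2 * n) + p / 4 ∈ Set.Icc a b)
    (f f' : ℝ → ℝ) (C : ℝ)
    (hf : ∀ t ∈ Set.Icc a b, HasDerivWithinAt f (f' t) (Set.Icc a b) t)
    (hC : ∀ t ∈ Set.Icc a b, |f' t| ≤ C) :
    (π * p / (4 * n) + 1 / (2 * n) < 1) ∧
    ∃ g : ℝ → ℝ, ∀ t ∈ Set.Icc a b,
      HasDerivWithinAt
        (fun s => Real.cos (π * s / n) ^ 2 * f (s / (2 * n))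
          + Real.sin (π * s / n) ^ 2 * f (s / (2 * n) + p / 4))
        (g t) (Set.Icc a b) t ∧
      |g t| ≤ (π * p / (4 * n) + 1 / (2 * n)) * C := by
  have hπ := Real.pi_pos
  have hn1 : (1:ℝ) ≤ (n:ℝ) := by exact_mod_cast hn
  have hn0 : (0:ℝ) < (n:ℝ) := by linarith
  have hlt : π * p / (4 * n) + 1 / (2 * n) < 1 := by
    have h1 : (p:ℝ) * π < 2 * (2 * n - 1) := (lt_div_iff₀ hπ).mp hpn
    rw [div_add_div _ _ (by positivity : (4*(n:ℝ)) ≠ 0) (by positivity : (2*(n:ℝ)) ≠ 0),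
      div_lt_one (by positivity)]
    nlinarith
  refine ⟨hlt, ?_⟩
  refine ⟨fun t => (2 * Real.cos (π*t/n) * (-Real.sin (π*t/n) * (π/n))) * f (t/(2*n))
      + Real.cos (π*t/n)^2 * (f' (t/(2*n)) * (1/(2*n)))
      + ((2 * Real.sin (π*t/n) * (Real.cos (π*t/n) * (π/n))) * f (t/(2*n)+p/4)
      + Real.sin (π*t/n)^2 * (f' (t/(2*n)+p/4) * (1/(2*n)))), ?_⟩
  intro t ht
  have harg : HasDerivAt (fun s : ℝ => π*s/n) (π/n) t := by
    simpa using ((hasDerivAt_id t).const_mul π).div_const (n:ℝ)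
  have hcos : HasDerivAt (fun s => Real.cos (π*s/n)) (-Real.sin (π*t/n) * (π/n)) t :=
    by have := (Real.hasDerivAt_cos (π*t/n)).comp t harg; exact this
  have hsin : HasDerivAt (fun s => Real.sin (π*s/n)) (Real.cos (π*t/n) * (π/n)) t :=
    by have := (Real.hasDerivAt_sin (π*t/n)).comp t harg; exact this
  have hcos2 : HasDerivWithinAt (fun s => Real.cos (π*s/n)^2)
      (2 * Real.cos (π*t/n) * (-Real.sin (π*t/n) * (π/n))) (Set.Icc a b) t := by
    simpa [mul_comm, mul_assoc, mul_left_comm] using (hcos.fun_pow 2).hasDerivWithinAt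
  have hsin2 : HasDerivWithinAt (fun s => Real.sin (π*s/n)^2)
      (2 * Real.sin (π*t/n) * (Real.cos (π*t/n) * (π/n))) (Set.Icc a b) t := by
    simpa [mul_comm, mul_assoc, mul_left_comm] using (hsin.fun_pow 2).hasDerivWithinAt
  have hinner0 : HasDerivWithinAt (fun s : ℝ => s/(2*(n:ℝ))) (1/(2*n)) (Set.Icc a b) t := by
    simpa using ((hasDerivAt_id t).div_const (2*(n:ℝ))).hasDerivWithinAt
  have hinnerp : HasDerivWithinAt (fun s : ℝ => s/(2*(n:ℝ)) + p/4) (1/(2*n)) (Set.Icc a b) t :=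
    hinner0.add_const _
  have hcomp0 : HasDerivWithinAt (fun s => f (s/(2*(n:ℝ))))
      (f' (t/(2*n)) * (1/(2*n))) (Set.Icc a b) t :=
    (hf _ (hJ0 t ht)).comp t hinner0 (fun x hx => hJ0 x hx)
  have hcompp : HasDerivWithinAt (fun s => f (s/(2*(n:ℝ)) + p/4))
      (f' (t/(2*n)+p/4) * (1/(2*n))) (Set.Icc a b) t :=
    (hf _ (hJp t ht)).comp t hinnerp (fun x hx => hJp x hx)
  constructor
  · exact (hcos2.mul hcomp0).add (hsin2.mul hcompp)
  · -- bound
    beta_reduce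
    set c := Real.cos (π*t/n) with hc
    set s := Real.sin (π*t/n) with hs
    have hC0 : 0 ≤ C := le_trans (abs_nonneg _) (hC t ht)
    have hΔ : |f (t/(2*n)+p/4) - f (t/(2*n))| ≤ C * (p/4) := by
      have := (convex_Icc a b).norm_image_sub_le_of_norm_hasDerivWithin_le
        (fun x hx => hf x hx) (fun x hx => by simpa [Real.norm_eq_abs] using hC x hx)
        (hJ0 t ht) (hJp t ht)
      have he : (t/(2*(n:ℝ))+p/4) - t/(2*n) = (p:ℝ)/4 := by ring
      simpa [Real.norm_eq_abs, he, abs_of_nonneg (by positivity : (0:ℝ) ≤ (p:ℝ)/4)] using this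
    have h2sc : |2 * s * c| ≤ 1 := by
      rw [hs, hc, show 2 * Real.sin (π*t/n) * Real.cos (π*t/n) = Real.sin (2*(π*t/n)) from
        (Real.sin_two_mul _).symm]
      exact Real.abs_sin_le_one _
    have hmix : |c^2 * f' (t/(2*n)) + s^2 * f' (t/(2*n)+p/4)| ≤ C := by
      have hpyth : s^2 + c^2 = 1 := Real.sin_sq_add_cos_sq _
      calc |c^2 * f' (t/(2*n)) + s^2 * f' (t/(2*n)+p/4)|
          ≤ |c^2 * f' (t/(2*n))| + |s^2 * f' (t/(2*n)+p/4)| := abs_add_le _ _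
        _ = c^2 * |f' (t/(2*n))| + s^2 * |f' (t/(2*n)+p/4)| := by
            rw [abs_mul, abs_mul, abs_of_nonneg (sq_nonneg c), abs_of_nonneg (sq_nonneg s)]
        _ ≤ c^2 * C + s^2 * C := by
            gcongr <;> [exact hC _ (hJ0 t ht); exact hC _ (hJp t ht)]
        _ = C := by nlinarith [hpyth]
    have e : (2 * c * (-s * (π/n))) * f (t/(2*n))
        + c^2 * (f' (t/(2*n)) * (1/(2*n)))
        + ((2 * s * (c * (π/n))) * f (t/(2*n)+p/4)
        + s^2 * (f' (t/(2*n)+p/4) * (1/(2*n))))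
        = (π/n) * ((2*s*c) * (f (t/(2*n)+p/4) - f (t/(2*n))))
          + (1/(2*n)) * (c^2 * f' (t/(2*n)) + s^2 * f' (t/(2*n)+p/4)) := by ring
    rw [e]
    have hA : |(π/n) * ((2*s*c) * (f (t/(2*n)+p/4) - f (t/(2*n))))| ≤ π/n * (C * (p/4)) := by
      rw [abs_mul, abs_of_pos (by positivity : (0:ℝ) < π/n), abs_mul]
      refine mul_le_mul_of_nonneg_left ?_ (by positivity)
      calc |2*s*c| * |f (t/(2*n)+p/4) - f (t/(2*n))| ≤ 1 * (C * (p/4)) :=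
            mul_le_mul h2sc hΔ (abs_nonneg _) one_pos.le
        _ = C * (p/4) := one_mul _
    have hB : |(1/(2*(n:ℝ))) * (c^2 * f' (t/(2*n)) + s^2 * f' (t/(2*n)+p/4))| ≤ 1/(2*n) * C := by
      rw [abs_mul, abs_of_pos (by positivity : (0:ℝ) < 1/(2*(n:ℝ)))]
      exact mul_le_mul_of_nonneg_left hmix (by positivity)
    calc |(π/n) * ((2*s*c) * (f (t/(2*n)+p/4) - f (t/(2*n))))
          + (1/(2*n)) * (c^2 * f' (t/(2*n)) + s^2 * f' (t/(2*n)+p/4))|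
        ≤ |(π/n) * ((2*s*c) * (f (t/(2*n)+p/4) - f (t/(2*n))))|
          + |(1/(2*n)) * (c^2 * f' (t/(2*n)) + s^2 * f' (t/(2*n)+p/4))| := abs_add_le _ _
      _ ≤ π/n * (C * (p/4)) + 1/(2*n) * C := add_le_add hA hB
      _ = (π * p / (4 * n) + 1 / (2 * n)) * C := by ring
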